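/- The *-embedding relation ≤* is a partial order on the set of finite words over any alphabet Σ: it is reflexive, antisymmetric, and transitive. -/
import Mathlib


/-- `a` is `*`-embedded into `b`. -/
def StarEmbed {α : Type*} (a b : List α) : Prop :=
  ∃ f : Fin a.length → Fin b.length, StrictMono f ∧
    (∀ k : Fin a.length, b.get (f k) = a.get k) ∧
    (∀ i : Fin b.length, ∃ j : Fin a.length, i ≤ f j ∧ b.get i = b.get (f j))

/-- The `*`-embedding relation is a partial order on finite words:
reflexive, antisymmetric and transitive. -/
theorem starEmbed_partialOrder {α : Type*} :
    (∀ a : List α, StarEmbed a a) ∧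
    (∀ a b : List α, StarEmbed a b → StarEmbed b a → a = b) ∧
    (∀ a b c : List α, StarEmbed a b → StarEmbed b c → StarEmbed a c) := by
  refine ⟨?_, ?_, ?_⟩
  · intro a
    exact ⟨id, strictMono_id, fun k => rfl, fun i => ⟨i, le_refl _, rfl⟩⟩
  · intro a b ⟨f, hf, hfe, _⟩ ⟨g, hg, _, _⟩
    have hlen : a.length = b.length := le_antisymm
      (by simpa using Fintype.card_le_of_injective f hf.injective)
      (by simpa using Fintype.card_le_of_injective g hg.injective)
    set F : Fin a.length → Fin a.length := fun k => Fin.cast hlen.symm (f k) with hFdef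
    have hF : StrictMono F := fun i j h => by
      simp only [hFdef, Fin.lt_def, Fin.coe_cast]
      exact hf h
    have hsurj : Function.Surjective F :=
      Finite.injective_iff_surjective.mp hF.injective
    have hrange : Set.range F = Set.range (id : Fin a.length → Fin a.length) := by
      simp [Set.range_eq_univ.mpr hsurj]
    haveI : WellFoundedLT (Fin a.length) := inferInstance
    have hFid : F = id := (hF.range_inj strictMono_id).1 hrange
    have hfval : ∀ k : Fin a.length, ((f k : ℕ)) = (k : ℕ) := by
      intro k
      have := congrFun hFid k
      simpa [hFdef, Fin.ext_iff] using this
    apply List.ext_get hlen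
    intro n h1 h2
    have := hfe ⟨n, h1⟩
    rw [← this]
    congr 1
    exact Fin.ext (hfval ⟨n, h1⟩)
  · rintro a b c ⟨f, hf, hfe, hfc⟩ ⟨g, hg, hge, hgc⟩
    refine ⟨g ∘ f, hg.comp hf, fun k => (hge (f k)).trans (hfe k), ?_⟩
    intro i
    obtain ⟨j, hij, hei⟩ := hgc i
    obtain ⟨k, hjk, hej⟩ := hfc j
    refine ⟨k, le_trans hij (hg.monotone hjk), ?_⟩
    simp only [Function.comp]
    rw [hei, hge j, hej, ← hge (f k)]
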